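/- Under the Logit model with constant unit costs, suppose θ > -∞ and each w_j is strictly decreasing, twice continuously differentiable, with sub-quadratic second derivatives. If p_f maximizes firm f's profit, and products j, k ∈ J_f satisfy c_j = c_k and w_j = w_k (identical cost and identical price-sensitivity functions, even if values v_j ≠ v_k), then p_j = p_k. (Proof: both prices solve θ̃(p) = π̂_f(p) + c where θ̃(p) = p - 1/|w'(p)| is strictly increasing when ω < 1.) -/

import Mathlib

open Filter Set

noncomputable def logitP18 {J : ℕ} (w : Fin J → ℝ → ℝ) (v : Fin J → ℝ) (θ : ℝ)
    (p : Fin J → ℝ) (j : Fin J) : ℝ :=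
  Real.exp (w j (p j) + v j) / (Real.exp θ + ∑ k, Real.exp (w k (p k) + v k))

noncomputable def profit18 {J : ℕ} (w : Fin J → ℝ → ℝ) (v : Fin J → ℝ) (θ : ℝ)
    (c : Fin J → ℝ) (Jf : Finset (Fin J)) (p : Fin J → ℝ) : ℝ :=
  ∑ j ∈ Jf, logitP18 w v θ p j * (p j - c j)

lemma profit_update_formula {J : ℕ} (w : Fin J → ℝ → ℝ) (v : Fin J → ℝ) (θ : ℝ)
    (c : Fin J → ℝ) (Jf : Finset (Fin J)) (p : Fin J → ℝ) (j : Fin J) (hj : j ∈ Jf)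
    (t : ℝ) :
    profit18 w v θ c Jf (Function.update p j t) =
      ((∑ i ∈ Jf.erase j, Real.exp (w i (p i) + v i) * (p i - c i))
        + Real.exp (w j t + v j) * (t - c j)) /
      ((Real.exp θ + ∑ i ∈ Finset.univ.erase j, Real.exp (w i (p i) + v i))
        + Real.exp (w j t + v j)) := by
  have hupd : ∀ i : Fin J, i ≠ j → Function.update p j t i = p i := by
    intro i hi; exact Function.update_of_ne hi t p
  have hden : (∑ m, Real.exp (w m (Function.update p j t m) + v m))
      = Real.exp (w j t + v j) + ∑ i ∈ Finset.univ.erase j, Real.exp (w i (p i) + v i) := by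
    rw [← Finset.add_sum_erase _ _ (Finset.mem_univ j)]
    congr 1
    · simp
    · exact Finset.sum_congr rfl fun i hi => by rw [hupd i (Finset.ne_of_mem_erase hi)]
  unfold profit18 logitP18
  rw [hden]
  simp only [div_mul_eq_mul_div]
  rw [← Finset.sum_div]
  congr 1
  · rw [← Finset.add_sum_erase _ _ hj]
    rw [add_comm]
    congr 1
    · exact Finset.sum_congr rfl fun i hi => by rw [hupd i (Finset.ne_of_mem_erase hi)]
    · simp
  · ring

lemma foc18 {J : ℕ} (w w' : Fin J → ℝ → ℝ) (v : Fin J → ℝ) (θ : ℝ)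
    (c : Fin J → ℝ) (Jf : Finset (Fin J))
    (hd1 : ∀ k : Fin J, ∀ x > (0:ℝ), HasDerivAt (w k) (w' k x) x)
    (hneg : ∀ k : Fin J, ∀ x > (0:ℝ), w' k x < 0)
    (p : Fin J → ℝ) (hp : ∀ i, 0 < p i)
    (hmax : ∀ q : Fin J → ℝ, (∀ i, i ∉ Jf → q i = p i) → (∀ i, 0 ≤ q i) →
      profit18 w v θ c Jf q ≤ profit18 w v θ c Jf p)
    (j : Fin J) (hj : j ∈ Jf) :
    p j - c j + 1 / (w' j (p j)) = profit18 w v θ c Jf p := by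
  set S := ∑ i ∈ Jf.erase j, Real.exp (w i (p i) + v i) * (p i - c i) with hS
  set A := Real.exp θ + ∑ i ∈ Finset.univ.erase j, Real.exp (w i (p i) + v i) with hA
  have hApos : 0 < A := by
    have : (0:ℝ) ≤ ∑ i ∈ Finset.univ.erase j, Real.exp (w i (p i) + v i) :=
      Finset.sum_nonneg fun i _ => (Real.exp_pos _).le
    have := Real.exp_pos θ; linarith
  set φ : ℝ → ℝ := fun t => (S + Real.exp (w j t + v j) * (t - c j)) /
      (A + Real.exp (w j t + v j)) with hφ
  have hφeq : ∀ t, profit18 w v θ c Jf (Function.update p j t) = φ t := fun t =>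
    profit_update_formula w v θ c Jf p j hj t
  have hprofit : profit18 w v θ c Jf p = φ (p j) := by
    rw [← hφeq (p j), Function.update_eq_self]
  -- local max
  have hloc : IsLocalMax φ (p j) := by
    have hev : ∀ᶠ t in nhds (p j), t ∈ Ioi (0:ℝ) := isOpen_Ioi.eventually_mem (hp j)
    refine hev.mono fun t ht => ?_
    have := hmax (Function.update p j t)
      (fun i hi => Function.update_of_ne (fun h => hi (by rw [h]; exact hj)) t p)
      (fun i => by
        rcases eq_or_ne i j with rfl | hne
        · simpa using (le_of_lt ht)
        · rw [Function.update_of_ne hne]; exact (hp i).le)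
    rw [hφeq, hprofit] at this
    exact this
  -- derivative
  set E := Real.exp (w j (p j) + v j) with hE
  have hEpos : 0 < E := Real.exp_pos _
  set W := w' j (p j) with hW
  have hWneg : W < 0 := hneg j _ (hp j)
  have hDE : HasDerivAt (fun t => Real.exp (w j t + v j)) (E * W) (p j) := by
    have := ((hd1 j _ (hp j)).add_const (v j)).exp
    simpa [hE, mul_comm] using this
  have hnum : HasDerivAt (fun t => S + Real.exp (w j t + v j) * (t - c j))
      (E * W * (p j - c j) + E * 1) (p j) := by
    exact (hDE.mul ((hasDerivAt_id (p j)).sub_const (c j))).const_add S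
  have hden : HasDerivAt (fun t => A + Real.exp (w j t + v j)) (E * W) (p j) :=
    hDE.const_add A
  have hD0 : A + E > 0 := by linarith
  have hφ' : HasDerivAt φ
      (((E * W * (p j - c j) + E * 1) * (A + E) - (S + E * (p j - c j)) * (E * W)) /
        (A + E) ^ 2) (p j) := by
    exact hnum.div hden (ne_of_gt hD0)
  have h0 : ((E * W * (p j - c j) + E * 1) * (A + E) - (S + E * (p j - c j)) * (E * W)) /
        (A + E) ^ 2 = 0 := by
    rw [← hφ'.deriv]; exact hloc.deriv_eq_zero
  have h0' : (E * W * (p j - c j) + E) * (A + E) - (S + E * (p j - c j)) * (E * W) = 0 := by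
    have h2 : (A + E) ^ 2 ≠ 0 := pow_ne_zero _ (ne_of_gt hD0)
    field_simp at h0
    linear_combination h0
  rw [hprofit]
  show p j - c j + 1 / W = (S + E * (p j - c j)) / (A + E)
  have hWne : W ≠ 0 := ne_of_lt hWneg
  field_simp
  nlinarith [h0', hEpos, hD0]

theorem stmt_18 {J : ℕ} (w w' w'' : Fin J → ℝ → ℝ) (v : Fin J → ℝ) (θ : ℝ)
    (c : Fin J → ℝ) (Jf : Finset (Fin J)) (hc : ∀ i, 0 ≤ c i)
    (hd1 : ∀ k : Fin J, ∀ x > (0:ℝ), HasDerivAt (w k) (w' k x) x)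
    (hd2 : ∀ k : Fin J, ∀ x > (0:ℝ), HasDerivAt (w' k) (w'' k x) x)
    (hneg : ∀ k : Fin J, ∀ x > (0:ℝ), w' k x < 0)
    -- sub-quadratic second derivatives
    (hsq : ∀ k : Fin J, ∀ x > (0:ℝ), w'' k x / (w' k x) ^ 2 < 1)
    (p : Fin J → ℝ) (hp : ∀ i, 0 < p i)
    -- p_f maximizes firm f's profit
    (hmax : ∀ q : Fin J → ℝ, (∀ i, i ∉ Jf → q i = p i) → (∀ i, 0 ≤ q i) →
      profit18 w v θ c Jf q ≤ profit18 w v θ c Jf p)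
    (j k : Fin J) (hj : j ∈ Jf) (hk : k ∈ Jf)
    (hcjk : c j = c k) (hwjk : w j = w k) (hwjk' : w' j = w' k) :
    p j = p k := by
  have hfj := foc18 w w' v θ c Jf hd1 hneg p hp hmax j hj
  have hfk := foc18 w w' v θ c Jf hd1 hneg p hp hmax k hk
  -- g(p j) = g(p k) where g t = t + 1/(w' j t)
  set g : ℝ → ℝ := fun t => t + 1 / (w' j t) with hg
  have hgeq : g (p j) = g (p k) := by
    have : p j - c j + 1 / (w' j (p j)) = p k - c k + 1 / (w' k (p k)) := by
      rw [hfj, hfk]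
    simp only [hg, hwjk', hcjk] at this ⊢
    linarith
  -- g is strictly monotone on Ioi 0
  have hg' : ∀ x ∈ Ioi (0:ℝ), HasDerivAt g (1 - w'' j x / (w' j x) ^ 2) x := by
    intro x hx
    have hne : w' j x ≠ 0 := ne_of_lt (hneg j x hx)
    have hinv : HasDerivAt (fun t => (w' j t)⁻¹) (-(w'' j x) / (w' j x) ^ 2) x :=
      (hd2 j x hx).inv hne
    have := (hasDerivAt_id x).add hinv
    simp only [hg, one_div]
    convert this using 1
    · rfl
    · rfl
    · rfl
    · ring
  have hmono : StrictMonoOn g (Ioi 0) := by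
    apply strictMonoOn_of_deriv_pos (convex_Ioi 0)
    · intro x hx
      exact (hg' x hx).continuousAt.continuousWithinAt
    · intro x hx
      rw [interior_Ioi] at hx
      rw [(hg' x hx).deriv]
      have := hsq j x hx
      have hsq2 : (0:ℝ) < (w' j x) ^ 2 := by
        have h := hneg j x hx; nlinarith
      have h2 : w'' j x < (w' j x) ^ 2 := (div_lt_one hsq2).mp this
      rw [sub_pos, div_lt_one hsq2]
      exact h2
  exact hmono.injOn (hp j) (hp k) hgeq
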